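/- The greedy mechanism M_AP is a 2-approximation: on every instance, the weight of the maximum vertex-weighted b-matching is at most twice the weight of the matching returned by M_AP. Moreover this bound is tight: for every ε > 0 there is an instance (two agents of capacity 1, tasks of values 1+ε and 1, edges {(a_1,t_1),(a_1,t_2),(a_2,t_1)}) on which the ratio is (2+ε)/(1+ε). -/

import Mathlib

open Classical

/-- An edge of the bipartite graph: a pair (agent, task). -/
abbrev Edge (n m : ℕ) := Fin n × Fin m

variable {n m : ℕ}

/-- Number of tasks assigned to agent `i` in the edge set `μ`. -/
def deg (μ : Finset (Edge n m)) (i : Fin n) : ℕ := (μ.filter (fun e => e.1 = i)).card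

/-- `μ` is a b-matching over the edge set `E'`: it uses only edges of `E'`, each agent `i`
receives at most `b i` tasks, and each task is matched to at most one agent. -/
def IsBMatching (b : Fin n → ℕ) (E' μ : Finset (Edge n m)) : Prop :=
  μ ⊆ E' ∧ (∀ i, deg μ i ≤ b i) ∧ ∀ j : Fin m, (μ.filter (fun e => e.2 = j)).card ≤ 1

/-- Weight of a matching: total value of matched tasks. -/
noncomputable def weight (q : Fin m → ℝ) (μ : Finset (Edge n m)) : ℝ := ∑ e ∈ μ, q e.2

/-- Utility of agent `i`: total value of the tasks matched to `i`. -/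
noncomputable def util (q : Fin m → ℝ) (i : Fin n) (μ : Finset (Edge n m)) : ℝ :=
  ∑ e ∈ μ.filter (fun e => e.1 = i), q e.2

/-- `μ` is a maximum vertex-weighted b-matching over the edge set `E'`. -/
def IsMaxMatching (b : Fin n → ℕ) (q : Fin m → ℝ) (E' μ : Finset (Edge n m)) : Prop :=
  IsBMatching b E' μ ∧ ∀ ν, IsBMatching b E' ν → weight q ν ≤ weight q μ

/-- The edges of `E` incident to agent `i`. -/
def agentEdges (E : Finset (Edge n m)) (i : Fin n) : Finset (Edge n m) :=
  E.filter (fun e => e.1 = i)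

/-- The edge set obtained from `E` when agent `i` reports `S` instead of its true edges. -/
def deviate (E : Finset (Edge n m)) (i : Fin n) (S : Finset (Edge n m)) : Finset (Edge n m) :=
  E.filter (fun e => e.1 ≠ i) ∪ S

/-- A valid report of agent `i`: a nonempty subset of its true incident edges. -/
def ValidReport (E : Finset (Edge n m)) (i : Fin n) (S : Finset (Edge n m)) : Prop :=
  S ⊆ agentEdges E i ∧ S.Nonempty
open Classical in
/-- The tasks sorted in non-increasing order of value (ties broken by index). -/
noncomputable def sortedTasks (m : ℕ) (q : Fin m → ℝ) : List (Fin m) :=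
  List.insertionSort (fun j k => q k ≤ q j) (List.finRange m)

/-- The greedy mechanism `M_AP`: process tasks in non-increasing value order, assigning each
task to the highest-priority unsaturated agent connected to it, if any. -/
noncomputable def MAP (b : Fin n → ℕ) (q : Fin m → ℝ) (E' : Finset (Edge n m)) :
    Finset (Edge n m) :=
  (sortedTasks m q).foldl (fun μ j =>
    match (List.finRange n).find? (fun i => decide ((i, j) ∈ E' ∧ deg μ i < b i)) with
    | some i => insert (i, j) μ
    | none => μ) ∅

/-- `p = [(i₁,j₁),…,(i_L,j_L)]` is an augmenting path from task `j = j₁` with respect to the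
matching `μ` in the graph `E'`: the edges `(i_ℓ, j_ℓ)` are non-matching edges of `E'`, the
edges `(i_ℓ, j_{ℓ+1})` are matching edges, all interior agents are saturated and the final
agent is unsaturated. -/
structure IsAugPathFrom (b : Fin n → ℕ) (E' μ : Finset (Edge n m)) (j : Fin m)
    (p : List (Edge n m)) : Prop where
  ne : p ≠ []
  starts : ∀ e ∈ p.head?, e.2 = j
  mem : ∀ e ∈ p, e ∈ E' ∧ e ∉ μ
  matched : ∀ k, (h : k + 1 < p.length) →
    ((p.get ⟨k, Nat.lt_of_succ_lt h⟩).1, (p.get ⟨k + 1, h⟩).2) ∈ μ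
  satInterior : ∀ k, (h : k + 1 < p.length) →
    b (p.get ⟨k, Nat.lt_of_succ_lt h⟩).1 ≤ deg μ (p.get ⟨k, Nat.lt_of_succ_lt h⟩).1
  unsatLast : ∀ e ∈ p.getLast?, deg μ e.1 < b e.1
  agentsNodup : (p.map Prod.fst).Nodup
  tasksNodup : (p.map Prod.snd).Nodup

/-- The matching edges of an augmenting path. -/
def pathMatched (p : List (Edge n m)) : List (Edge n m) :=
  (p.zip p.tail).map (fun ef => (ef.1.1, ef.2.2))

/-- Flip an augmenting path: remove its matching edges and add its non-matching edges. -/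
def applyPath (μ : Finset (Edge n m)) (p : List (Edge n m)) : Finset (Edge n m) :=
  (μ \ (pathMatched p).toFinset) ∪ p.toFinset

/-- A numeric key realizing the lexicographic order (by vertex indices) on augmenting paths. -/
def pathKey (n m : ℕ) (p : List (Edge n m)) : ℕ :=
  ((p.flatMap fun (e : Edge n m) => [e.1.val + 1, e.2.val + 1]) ++
    List.replicate (2 * n - 2 * p.length) 0).foldl (fun a d => a * (n + m + 2) + d) 0

/-- DFS explores agents in priority order and goes deep first: it returns the lexicographically
least augmenting path. -/
def dfsCost (n m : ℕ) (p : List (Edge n m)) : ℕ := pathKey n m p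

/-- BFS returns a shortest augmenting path, exploring vertices in priority order: it returns
the lexicographically least augmenting path among those of minimum length. -/
def bfsCost (n m : ℕ) (p : List (Edge n m)) : ℕ :=
  p.length * (n + m + 2) ^ (2 * n + 2) + pathKey n m p

/-- Select the cost-minimal augmenting path from task `j`, if an augmenting path exists. -/
noncomputable def selectPath (cost : List (Edge n m) → ℕ) (b : Fin n → ℕ)
    (E' μ : Finset (Edge n m)) (j : Fin m) : Option (List (Edge n m)) :=
  if h : ∃ p, IsAugPathFrom b E' μ j p ∧ ∀ p', IsAugPathFrom b E' μ j p' → cost p ≤ cost p'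
  then some h.choose else none

/-- The augmenting-path algorithm: process tasks in non-increasing value order, at each step
flipping the augmenting path found by the (deterministic) search given by `cost`. -/
noncomputable def runAug (cost : List (Edge n m) → ℕ) (b : Fin n → ℕ) (q : Fin m → ℝ)
    (E' : Finset (Edge n m)) : Finset (Edge n m) :=
  (sortedTasks m q).foldl (fun μ j =>
    match selectPath cost b E' μ j with
    | some p => applyPath μ p
    | none => μ) ∅

/-- The maximum vertex-weighted b-matching mechanism using breadth-first search. -/
noncomputable def MBFS (b : Fin n → ℕ) (q : Fin m → ℝ) (E' : Finset (Edge n m)) :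
    Finset (Edge n m) := runAug (bfsCost n m) b q E'

/-- The maximum vertex-weighted b-matching mechanism using depth-first search. -/
noncomputable def MDFS (b : Fin n → ℕ) (q : Fin m → ℝ) (E' : Finset (Edge n m)) :
    Finset (Edge n m) := runAug (dfsCost n m) b q E'


section AuxGreedy

variable {n m : ℕ}

/-- One step of the greedy mechanism. -/
noncomputable def gstep (b : Fin n → ℕ) (E' : Finset (Edge n m)) (μ : Finset (Edge n m))
    (j : Fin m) : Finset (Edge n m) :=
  match (List.finRange n).find? (fun i => decide ((i, j) ∈ E' ∧ deg μ i < b i)) with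
  | some i => insert (i, j) μ
  | none => μ

lemma MAP_eq_foldl (b : Fin n → ℕ) (q : Fin m → ℝ) (E' : Finset (Edge n m)) :
    MAP b q E' = (sortedTasks m q).foldl (gstep b E') ∅ := rfl

lemma gstep_cases (b : Fin n → ℕ) (E' μ : Finset (Edge n m)) (j : Fin m) :
    ((∀ i, (i, j) ∈ E' → b i ≤ deg μ i) ∧ gstep b E' μ j = μ) ∨
      ∃ i, (i, j) ∈ E' ∧ deg μ i < b i ∧ gstep b E' μ j = insert (i, j) μ := by
  unfold gstep
  cases h : (List.finRange n).find? (fun i => decide ((i, j) ∈ E' ∧ deg μ i < b i)) with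
  | none =>
    left
    refine ⟨fun i hi => ?_, rfl⟩
    have := List.find?_eq_none.mp h i (List.mem_finRange i)
    rw [decide_eq_true_eq] at this
    push_neg at this
    exact this hi
  | some i =>
    right
    have := List.find?_some h
    rw [decide_eq_true_eq] at this
    exact ⟨i, this.1, this.2, rfl⟩

lemma gstep_subset (b : Fin n → ℕ) (E' μ : Finset (Edge n m)) (j : Fin m) :
    μ ⊆ gstep b E' μ j := by
  rcases gstep_cases b E' μ j with ⟨_, h⟩ | ⟨i, _, _, h⟩
  · rw [h]
  · rw [h]; exact Finset.subset_insert _ _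

lemma deg_mono {μ ν : Finset (Edge n m)} (h : μ ⊆ ν) (i : Fin n) : deg μ i ≤ deg ν i :=
  Finset.card_le_card (Finset.filter_subset_filter _ h)

lemma deg_insert_le (μ : Finset (Edge n m)) (e : Edge n m) (i : Fin n) :
    deg (insert e μ) i ≤ deg μ i + 1 := by
  unfold deg
  rw [Finset.filter_insert]
  split
  · exact Finset.card_insert_le _ _
  · exact Nat.le_succ _

lemma deg_insert_ne {e : Edge n m} {i : Fin n} (h : ¬ e.1 = i) (μ : Finset (Edge n m)) :
    deg (insert e μ) i = deg μ i := by
  unfold deg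
  rw [Finset.filter_insert, if_neg h]

lemma gstep_deg (b : Fin n → ℕ) (E' μ : Finset (Edge n m)) (j : Fin m)
    (hμ : ∀ i, deg μ i ≤ b i) (i : Fin n) : deg (gstep b E' μ j) i ≤ b i := by
  rcases gstep_cases b E' μ j with ⟨_, h⟩ | ⟨i', _, hlt, h⟩
  · rw [h]; exact hμ i
  · rw [h]
    by_cases hii : (i' : Fin n) = i
    · subst hii
      exact le_trans (deg_insert_le μ _ i') (by omega)
    · rw [deg_insert_ne (by simpa using hii) μ]
      exact hμ i

lemma foldl_deg (b : Fin n → ℕ) (E' : Finset (Edge n m)) (L : List (Fin m))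
    (μ : Finset (Edge n m)) (hμ : ∀ i, deg μ i ≤ b i) (i : Fin n) :
    deg (L.foldl (gstep b E') μ) i ≤ b i := by
  induction L generalizing μ with
  | nil => exact hμ i
  | cons j L ih => exact ih _ (gstep_deg b E' μ j hμ)

lemma foldl_subset (b : Fin n → ℕ) (E' : Finset (Edge n m)) (L : List (Fin m))
    (μ : Finset (Edge n m)) : μ ⊆ L.foldl (gstep b E') μ := by
  induction L generalizing μ with
  | nil => exact Finset.Subset.refl _
  | cons j L ih => exact (gstep_subset b E' μ j).trans (ih _)

lemma foldl_subset_E (b : Fin n → ℕ) (E' : Finset (Edge n m)) (L : List (Fin m))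
    (μ : Finset (Edge n m)) (hμ : μ ⊆ E') : L.foldl (gstep b E') μ ⊆ E' := by
  induction L generalizing μ with
  | nil => exact hμ
  | cons j L ih =>
    refine ih _ ?_
    rcases gstep_cases b E' μ j with ⟨_, h⟩ | ⟨i', hE, _, h⟩
    · rw [h]; exact hμ
    · rw [h]; exact Finset.insert_subset hE hμ

lemma foldl_tasks (b : Fin n → ℕ) (E' : Finset (Edge n m)) (L : List (Fin m))
    (μ : Finset (Edge n m)) : ∀ e ∈ L.foldl (gstep b E') μ, e ∈ μ ∨ e.2 ∈ L := by
  induction L generalizing μ with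
  | nil => exact fun e he => Or.inl he
  | cons j L ih =>
    intro e he
    rcases ih _ e he with h | h
    · rcases gstep_cases b E' μ j with ⟨_, hg⟩ | ⟨i', _, _, hg⟩
      · rw [hg] at h; exact Or.inl h
      · rw [hg, Finset.mem_insert] at h
        rcases h with h | h
        · right; rw [h]; exact List.mem_cons_self
        · exact Or.inl h
    · right; exact List.mem_cons_of_mem _ h

lemma foldl_taskdeg (b : Fin n → ℕ) (E' : Finset (Edge n m)) (L : List (Fin m))
    (μ : Finset (Edge n m)) (hnd : L.Nodup) (hfresh : ∀ e ∈ μ, e.2 ∉ L)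
    (hμ : ∀ j : Fin m, (μ.filter (fun e => e.2 = j)).card ≤ 1) :
    ∀ j : Fin m, ((L.foldl (gstep b E') μ).filter (fun e => e.2 = j)).card ≤ 1 := by
  induction L generalizing μ with
  | nil => exact hμ
  | cons k L ih =>
    rw [List.nodup_cons] at hnd
    refine ih _ hnd.2 ?_ ?_
    · intro e he
      rcases gstep_cases b E' μ k with ⟨_, hg⟩ | ⟨i', _, _, hg⟩
      · rw [hg] at he
        exact fun hc => hfresh e he (List.mem_cons_of_mem _ hc)
      · rw [hg, Finset.mem_insert] at he
        rcases he with he | he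
        · rw [he]; exact hnd.1
        · exact fun hc => hfresh e he (List.mem_cons_of_mem _ hc)
    · intro j
      rcases gstep_cases b E' μ k with ⟨_, hg⟩ | ⟨i', _, _, hg⟩
      · rw [hg]; exact hμ j
      · rw [hg, Finset.filter_insert]
        split
        · rename_i hkj
          have hkj' : k = j := hkj
          have : μ.filter (fun e => e.2 = j) = ∅ := by
            refine Finset.filter_eq_empty_iff.mpr ?_
            intro e he hej
            exact hfresh e he (by rw [hej, ← hkj']; exact List.mem_cons_self)
          rw [this]
          simp
        · exact hμ j

lemma gstep_fiber {b : Fin n → ℕ} {E' μ : Finset (Edge n m)} {i : Fin n}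
    (hsat : b i ≤ deg μ i) (j : Fin m) :
    (gstep b E' μ j).filter (fun e => e.1 = i) = μ.filter (fun e => e.1 = i) := by
  rcases gstep_cases b E' μ j with ⟨_, hg⟩ | ⟨i', _, hlt, hg⟩
  · rw [hg]
  · rw [hg, Finset.filter_insert, if_neg]
    intro hii
    rw [show (i' : Fin n) = i from hii] at hlt
    omega

lemma foldl_fiber (b : Fin n → ℕ) (E' : Finset (Edge n m)) (L : List (Fin m))
    (μ : Finset (Edge n m)) {i : Fin n} (hsat : b i ≤ deg μ i) :
    (L.foldl (gstep b E') μ).filter (fun e => e.1 = i) = μ.filter (fun e => e.1 = i) := by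
  induction L generalizing μ with
  | nil => rfl
  | cons j L ih =>
    rw [List.foldl_cons, ih _ (hsat.trans (deg_mono (gstep_subset b E' μ j) i)),
      gstep_fiber hsat j]

lemma sortedTasks_perm (q : Fin m → ℝ) : (sortedTasks m q).Perm (List.finRange m) :=
  List.perm_insertionSort _ _

lemma sortedTasks_sorted (q : Fin m → ℝ) :
    (sortedTasks m q).Pairwise (fun j k => q k ≤ q j) :=
  haveI : IsTotal (Fin m) (fun j k => q k ≤ q j) := ⟨fun a b => le_total (q b) (q a)⟩
  haveI : IsTrans (Fin m) (fun j k => q k ≤ q j) := ⟨fun _ _ _ h1 h2 => le_trans h2 h1⟩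
  List.pairwise_insertionSort ..

lemma snd_inj_of_taskdeg {μ : Finset (Edge n m)}
    (h : ∀ j : Fin m, (μ.filter (fun e => e.2 = j)).card ≤ 1) :
    ∀ e ∈ μ, ∀ f ∈ μ, e.2 = f.2 → e = f := by
  intro e he f hf hef
  have he' : e ∈ μ.filter (fun x => x.2 = f.2) := Finset.mem_filter.mpr ⟨he, hef⟩
  have hf' : f ∈ μ.filter (fun x => x.2 = f.2) := Finset.mem_filter.mpr ⟨hf, rfl⟩
  exact Finset.card_le_one.mp (h f.2) e he' f hf'

/-- Key fact: if task `j` ends up unmatched by greedy, then every agent adjacent to it is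
saturated in the output, and every task matched to such an agent was processed before `j`. -/
lemma greedy_unmatched (b : Fin n → ℕ) (E' : Finset (Edge n m)) (q : Fin m → ℝ)
    {j : Fin m} {i : Fin n} (hiE : (i, j) ∈ E')
    (hun : ∀ e ∈ MAP b q E', ¬ e.2 = j) :
    b i ≤ deg (MAP b q E') i ∧
      ∀ e ∈ MAP b q E', e.1 = i → q j ≤ q e.2 := by
  classical
  have hjL : j ∈ sortedTasks m q :=
    ((sortedTasks_perm q).mem_iff).mpr (List.mem_finRange j)
  obtain ⟨L1, L2, hL⟩ := List.append_of_mem hjL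
  set μ1 : Finset (Edge n m) := L1.foldl (gstep b E') ∅ with hμ1
  have hGsplit : MAP b q E' = L2.foldl (gstep b E') (gstep b E' μ1 j) := by
    rw [MAP_eq_foldl, hL, List.foldl_append, List.foldl_cons]
  -- the step at `j` did nothing
  have hnone : (∀ i', (i', j) ∈ E' → b i' ≤ deg μ1 i') ∧ gstep b E' μ1 j = μ1 := by
    rcases gstep_cases b E' μ1 j with h | ⟨i', _, _, hg⟩
    · exact h
    · exfalso
      have : ((i', j) : Edge n m) ∈ MAP b q E' := by
        rw [hGsplit]
        apply foldl_subset
        rw [hg]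
        exact Finset.mem_insert_self _ _
      exact hun _ this rfl
  rw [hnone.2] at hGsplit
  have hsat : b i ≤ deg μ1 i := hnone.1 i hiE
  have hfib := foldl_fiber b E' L2 μ1 (i := i) hsat
  constructor
  · rw [hGsplit]
    calc b i ≤ deg μ1 i := hsat
      _ ≤ deg (L2.foldl (gstep b E') μ1) i := deg_mono (foldl_subset _ _ _ _) i
  · intro e he hei
    rw [hGsplit] at he
    have : e ∈ μ1.filter (fun e => e.1 = i) := by
      rw [← hfib]
      exact Finset.mem_filter.mpr ⟨he, hei⟩
    have heμ1 : e ∈ μ1 := (Finset.mem_filter.mp this).1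
    have he2 : e.2 ∈ L1 := by
      rcases foldl_tasks b E' L1 ∅ e heμ1 with h | h
      · exact absurd h (Finset.notMem_empty e)
      · exact h
    have hpw := sortedTasks_sorted q
    rw [hL, List.pairwise_append] at hpw
    exact hpw.2.2 e.2 he2 j (List.mem_cons_self)

/-- The 2-approximation bound for any b-matching. -/
lemma MAP_bound (b : Fin n → ℕ) (q : Fin m → ℝ) (hq : ∀ j, 0 < q j)
    (E μ : Finset (Edge n m)) (hμ : IsBMatching b E μ) :
    weight q μ ≤ 2 * weight q (MAP b q E) := by
  classical
  obtain ⟨hμE, hμdeg, hμtask⟩ := hμ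
  set G := MAP b q E with hG
  set L := sortedTasks m q with hLdef
  have hLnd : L.Nodup := ((sortedTasks_perm q).nodup_iff).mpr (List.nodup_finRange m)
  have hGE : G ⊆ E := foldl_subset_E b E L ∅ (Finset.empty_subset E)
  have hGdeg : ∀ i, deg G i ≤ b i := fun i => foldl_deg b E L ∅ (by simp [deg]) i
  have hGtask : ∀ j : Fin m, (G.filter (fun e => e.2 = j)).card ≤ 1 :=
    foldl_taskdeg b E L ∅ hLnd (by simp) (by simp)
  set P : Edge n m → Prop := fun e => ∃ f ∈ G, f.2 = e.2 with hP
  have hsplit : weight q μ = (∑ e ∈ μ.filter P, q e.2) + ∑ e ∈ μ.filter (fun e => ¬ P e), q e.2 :=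
    (Finset.sum_filter_add_sum_filter_not μ P _).symm
  -- matched part
  have hM : (∑ e ∈ μ.filter P, q e.2) ≤ weight q G := by
    have hinj : ∀ e ∈ μ.filter P, ∀ f ∈ μ.filter P, e.2 = f.2 → e = f := by
      intro e he f hf
      exact snd_inj_of_taskdeg hμtask e (Finset.filter_subset _ _ he) f (Finset.filter_subset _ _ hf)
    have h1 : (∑ e ∈ μ.filter P, q e.2) = ∑ j ∈ (μ.filter P).image Prod.snd, q j :=
      (Finset.sum_image hinj).symm
    have hinjG : ∀ e ∈ G, ∀ f ∈ G, e.2 = f.2 → e = f := snd_inj_of_taskdeg hGtask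
    have h2 : weight q G = ∑ j ∈ G.image Prod.snd, q j := (Finset.sum_image hinjG).symm
    rw [h1, h2]
    apply Finset.sum_le_sum_of_subset_of_nonneg
    · intro j hj
      rw [Finset.mem_image] at hj ⊢
      obtain ⟨e, he, hej⟩ := hj
      obtain ⟨f, hf, hfe⟩ := (Finset.mem_filter.mp he).2
      exact ⟨f, hf, by rw [hfe, hej]⟩
    · exact fun j _ _ => (hq j).le
  -- unmatched part
  have hU : (∑ e ∈ μ.filter (fun e => ¬ P e), q e.2) ≤ weight q G := by
    set U : Finset (Edge n m) := μ.filter (fun e => ¬ P e) with hUdef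
    have hfib : (∑ i : Fin n, ∑ e ∈ U.filter (fun e => e.1 = i), q e.2) = ∑ e ∈ U, q e.2 :=
      Finset.sum_fiberwise U Prod.fst (fun e => q e.2)
    have hfibG : (∑ i : Fin n, ∑ e ∈ G.filter (fun e => e.1 = i), q e.2) = ∑ e ∈ G, q e.2 :=
      Finset.sum_fiberwise G Prod.fst (fun e => q e.2)
    rw [show (∑ e ∈ U, q e.2) = _ from hfib.symm, weight, show (∑ e ∈ G, q e.2) = _ from hfibG.symm]
    apply Finset.sum_le_sum
    intro i _
    set A : Finset (Edge n m) := U.filter (fun e => e.1 = i) with hA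
    set B : Finset (Edge n m) := G.filter (fun e => e.1 = i) with hB
    rcases A.eq_empty_or_nonempty with hAe | hAne
    · rw [hAe, Finset.sum_empty]
      exact Finset.sum_nonneg fun f _ => (hq f.2).le
    · -- every edge in A is an unmatched-task edge at agent i
      have key : ∀ e ∈ A, b i ≤ deg G i ∧ ∀ f ∈ B, q e.2 ≤ q f.2 := by
        intro e heA
        have heU : e ∈ U := (Finset.mem_filter.mp heA).1
        have hei : e.1 = i := (Finset.mem_filter.mp heA).2
        have heμ : e ∈ μ := (Finset.mem_filter.mp heU).1
        have hnP : ¬ P e := (Finset.mem_filter.mp heU).2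
        have hiE : (i, e.2) ∈ E := by
          have : e = (i, e.2) := by rw [← hei]
          rw [← this]
          exact hμE heμ
        have hun : ∀ f ∈ G, ¬ f.2 = e.2 := by
          intro f hf hfe
          exact hnP ⟨f, hf, hfe⟩
        obtain ⟨h1, h2⟩ := greedy_unmatched b E q hiE hun
        refine ⟨h1, fun f hfB => ?_⟩
        exact h2 f (Finset.mem_filter.mp hfB).1 (Finset.mem_filter.mp hfB).2
      obtain ⟨e0, he0⟩ := hAne
      have hBcard : deg μ i ≤ B.card := by
        calc deg μ i ≤ b i := hμdeg i
          _ ≤ deg G i := (key e0 he0).1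
          _ = B.card := rfl
      have hAcard : A.card ≤ B.card := by
        have h1 : A ⊆ μ.filter (fun e => e.1 = i) := by
          apply Finset.filter_subset_filter
          exact Finset.filter_subset _ _
        have h2 : A.card ≤ deg μ i := Finset.card_le_card h1
        omega
      have hBne : B.Nonempty := by
        rw [← Finset.card_pos]
        have : 0 < A.card := Finset.card_pos.mpr ⟨e0, he0⟩
        omega
      obtain ⟨f0, hf0B, hf0min⟩ := Finset.exists_min_image B (fun f => q f.2) hBne
      calc (∑ e ∈ A, q e.2) ≤ A.card • q f0.2 :=
            Finset.sum_le_card_nsmul A _ _ (fun e he => (key e he).2 f0 hf0B)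
        _ ≤ B.card • q f0.2 := by
            rw [nsmul_eq_mul, nsmul_eq_mul]
            exact mul_le_mul_of_nonneg_right (Nat.cast_le.mpr hAcard) (hq f0.2).le
        _ ≤ ∑ f ∈ B, q f.2 := Finset.card_nsmul_le_sum B _ _ hf0min
  calc weight q μ = _ := hsplit
    _ ≤ weight q G + weight q G := add_le_add hM hU
    _ = 2 * weight q G := by ring

end AuxGreedy


section Tight

lemma sortedTasks_two {ε : ℝ} (hε : 0 < ε) : sortedTasks 2 ![1 + ε, 1] = [0, 1] := by
  have hfr : List.finRange 2 = [0, 1] := by decide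
  have h : (![1 + ε, 1] : Fin 2 → ℝ) 1 ≤ ![1 + ε, 1] 0 := by
    simp only [Matrix.cons_val_one, Matrix.head_cons, Matrix.cons_val_zero]
    linarith
  simp [sortedTasks, hfr, List.insertionSort, List.orderedInsert, h]
  linarith

lemma MAP_two {ε : ℝ} (hε : 0 < ε) :
    MAP (fun _ => 1) ![1 + ε, 1] ({(0,0),(0,1),(1,0)} : Finset (Edge 2 2)) =
      {((0 : Fin 2), (0 : Fin 2))} := by
  rw [MAP_eq_foldl, sortedTasks_two hε]
  have h0 : gstep (fun _ => 1) ({(0,0),(0,1),(1,0)} : Finset (Edge 2 2)) ∅ 0 =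
      {((0 : Fin 2), (0 : Fin 2))} := by decide
  have h1 : gstep (fun _ => 1) ({(0,0),(0,1),(1,0)} : Finset (Edge 2 2))
      {((0 : Fin 2), (0 : Fin 2))} 1 = {((0 : Fin 2), (0 : Fin 2))} := by decide
  simp only [List.foldl_cons, List.foldl_nil, h0, h1]

lemma weight_MAP_two {ε : ℝ} (hε : 0 < ε) :
    weight ![1 + ε, 1] (MAP (fun _ => 1) ![1 + ε, 1] ({(0,0),(0,1),(1,0)} : Finset (Edge 2 2))) =
      1 + ε := by
  rw [MAP_two hε]
  simp [weight]

lemma weight_opt_two (ε : ℝ) :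
    weight ![1 + ε, 1] ({((0:Fin 2),(1:Fin 2)), ((1:Fin 2),(0:Fin 2))} : Finset (Edge 2 2)) =
      2 + ε := by
  rw [weight, Finset.sum_insert (by decide), Finset.sum_singleton]
  simp only [Matrix.cons_val_one, Matrix.head_cons, Matrix.cons_val_zero]
  ring

lemma opt_isMax {ε : ℝ} (hε : 0 < ε) :
    IsMaxMatching (fun _ => 1) ![1 + ε, 1] ({(0,0),(0,1),(1,0)} : Finset (Edge 2 2))
      ({((0:Fin 2),(1:Fin 2)), ((1:Fin 2),(0:Fin 2))} : Finset (Edge 2 2)) := by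
  constructor
  · constructor
    · decide
    · constructor
      · decide
      · decide
  · rintro ν ⟨hsub, hdeg, htask⟩
    have hq : ∀ j : Fin 2, (0 : ℝ) ≤ ![1 + ε, 1] j := by
      intro j
      fin_cases j <;> simp <;> linarith
    rw [weight_opt_two ε]
    by_cases h00 : ((0 : Fin 2), (0 : Fin 2)) ∈ ν
    · have h01 : ((0 : Fin 2), (1 : Fin 2)) ∉ ν := by
        intro h
        refine absurd (hdeg 0) ?_
        push_neg
        show 1 < deg ν 0
        unfold deg
        calc 1 < 2 := one_lt_two
          _ = ({((0:Fin 2),(0:Fin 2)), ((0:Fin 2),(1:Fin 2))} : Finset (Edge 2 2)).card := by decide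
          _ ≤ _ := by
            apply Finset.card_le_card
            intro e he
            simp only [Finset.mem_insert, Finset.mem_singleton] at he
            rcases he with rfl | rfl
            · exact Finset.mem_filter.mpr ⟨h00, rfl⟩
            · exact Finset.mem_filter.mpr ⟨h, rfl⟩
      have h10 : ((1 : Fin 2), (0 : Fin 2)) ∉ ν := by
        intro h
        refine absurd (htask 0) ?_
        push_neg
        calc 1 < 2 := one_lt_two
          _ = ({((0:Fin 2),(0:Fin 2)), ((1:Fin 2),(0:Fin 2))} : Finset (Edge 2 2)).card := by decide
          _ ≤ _ := by
            apply Finset.card_le_card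
            intro e he
            simp only [Finset.mem_insert, Finset.mem_singleton] at he
            rcases he with rfl | rfl
            · exact Finset.mem_filter.mpr ⟨h00, rfl⟩
            · exact Finset.mem_filter.mpr ⟨h, rfl⟩
      have hνs : ν ⊆ {((0 : Fin 2), (0 : Fin 2))} := by
        intro e he
        have hE := hsub he
        simp only [Finset.mem_insert, Finset.mem_singleton] at hE ⊢
        rcases hE with rfl | rfl | rfl
        · rfl
        · exact absurd he h01
        · exact absurd he h10
      have hle : weight ![1 + ε, 1] ν ≤ weight ![1 + ε, 1] {((0 : Fin 2), (0 : Fin 2))} :=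
        Finset.sum_le_sum_of_subset_of_nonneg hνs (fun e _ _ => hq e.2)
      have : weight ![1 + ε, 1] ({((0 : Fin 2), (0 : Fin 2))} : Finset (Edge 2 2)) = 1 + ε := by
        simp [weight]
      linarith [hle, this.le]
    · have hνs : ν ⊆ {((0:Fin 2),(1:Fin 2)), ((1:Fin 2),(0:Fin 2))} := by
        intro e he
        have hE := hsub he
        simp only [Finset.mem_insert, Finset.mem_singleton] at hE ⊢
        rcases hE with rfl | rfl | rfl
        · exact absurd he h00
        · exact Or.inl rfl
        · exact Or.inr rfl
      have hle := Finset.sum_le_sum_of_subset_of_nonneg hνs (fun e _ _ => hq e.2)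
      calc weight ![1 + ε, 1] ν ≤ _ := hle
        _ = 2 + ε := weight_opt_two ε

end Tight

/-- `M_AP` is a 2-approximation: on every instance the maximum-weight
b-matching weighs at most twice `M_AP`'s output; and the bound is tight: for every `ε > 0`,
on the instance with two agents of capacity 1, tasks of values `1+ε` and `1`, and edges
`{(a₁,t₁),(a₁,t₂),(a₂,t₁)}`, the ratio is `(2+ε)/(1+ε)`. -/
theorem MAP_two_approximation :
    (∀ (n m : ℕ) (b : Fin n → ℕ) (q : Fin m → ℝ), (∀ j, 0 < q j) →
      ∀ (E μ : Finset (Edge n m)), IsMaxMatching b q E μ →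
        weight q μ ≤ 2 * weight q (MAP b q E)) ∧
    (∀ ε : ℝ, 0 < ε →
      ∃ μ : Finset (Edge 2 2),
        IsMaxMatching (fun _ => 1) ![1 + ε, 1] ({(0,0),(0,1),(1,0)} : Finset (Edge 2 2)) μ ∧
        weight ![1 + ε, 1] μ /
            weight ![1 + ε, 1] (MAP (fun _ => 1) ![1 + ε, 1] ({(0,0),(0,1),(1,0)} : Finset (Edge 2 2))) =
          (2 + ε) / (1 + ε)) := by
  constructor
  · intro n m b q hq E μ hμ
    exact MAP_bound b q hq E μ hμ.1
  · intro ε hε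
    refine ⟨{((0:Fin 2),(1:Fin 2)), ((1:Fin 2),(0:Fin 2))}, opt_isMax hε, ?_⟩
    rw [weight_opt_two ε, weight_MAP_two hε]
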